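/- Let p, q ≥ 3 and let G be the complete bipartite graph on the disjoint union of finite sets A and B with |A| = p and |B| = q (every a ∈ A adjacent to every b ∈ B, no other adjacencies). Then for every a ∈ A and b ∈ B, ‖P χ_(a,b)‖² = 2(p−1)(q−1)/(pq). Moreover, for a, a' ∈ A and b, b' ∈ B with (a,b) ≠ (a',b'), the normalized inner product ⟨P χ_(a,b), P χ_(a',b')⟩ / (‖P χ_(a,b)‖·‖P χ_(a',b')‖) equals: −1/(q−1) if a = a' and b ≠ b'; −1/(p−1) if b = b' and a ≠ a'; and 1/((p−1)(q−1)) if a ≠ a' and b ≠ b'. -/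

import Mathlib

open scoped BigOperators RealInnerProductSpace

noncomputable section

variable {V : Type*} [Fintype V] [DecidableEq V]

/-- The indicator chain `χ_(a,b)`: 1 at `(a,b)`, −1 at `(b,a)`, 0 elsewhere. -/
def edgeChi (a b : V) : EuclideanSpace ℝ (V × V) :=
  WithLp.toLp 2 (fun p : V × V => (if p = (a, b) then 1 else if p = (b, a) then -1 else 0 : ℝ))

/-- The cycle space `H` of a simple graph `G`: the kernel of the boundary map
restricted to the edge space `C₁`. -/
def cycleSpace (G : SimpleGraph V) : Submodule ℝ (EuclideanSpace ℝ (V × V)) where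
  carrier := { f | (∀ u v : V, f (u, v) = - f (v, u)) ∧
               (∀ u v : V, ¬ G.Adj u v → f (u, v) = 0) ∧
               (∀ v : V, ∑ u : V, f (u, v) = 0) }
  add_mem' := by
    rintro f g ⟨hf1, hf2, hf3⟩ ⟨hg1, hg2, hg3⟩
    refine ⟨fun u v => ?_, fun u v h => ?_, fun v => ?_⟩
    · show f (u, v) + g (u, v) = -(f (v, u) + g (v, u))
      rw [hf1 u v, hg1 u v]; ring
    · show f (u, v) + g (u, v) = 0
      rw [hf2 u v h, hg2 u v h]; ring
    · show ∑ u : V, (f (u, v) + g (u, v)) = 0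
      rw [Finset.sum_add_distrib, hf3 v, hg3 v]; ring
  zero_mem' := by
    refine ⟨fun u v => ?_, fun u v h => ?_, fun v => ?_⟩ <;> simp
  smul_mem' := by
    rintro c f ⟨hf1, hf2, hf3⟩
    refine ⟨fun u v => ?_, fun u v h => ?_, fun v => ?_⟩
    · show c * f (u, v) = -(c * f (v, u))
      rw [hf1 u v]; ring
    · show c * f (u, v) = 0
      rw [hf2 u v h]; ring
    · show ∑ u : V, c * f (u, v) = 0
      rw [← Finset.mul_sum, hf3 v]; ring

/-- The projected edge vector `P χ_(a,b)`, where `P` is the orthogonal projection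
onto the cycle space of `G`. -/
def projEdge (G : SimpleGraph V) (a b : V) : EuclideanSpace ℝ (V × V) :=
  (Submodule.orthogonalProjectionOnto (cycleSpace G) (edgeChi a b) : EuclideanSpace ℝ (V × V))

namespace CBPAux

/-- real inner product on `EuclideanSpace` as a sum -/
lemma inner_sum (f g : EuclideanSpace ℝ (V × V)) :
    ⟪f, g⟫ = ∑ x : V × V, f x * g x := by
  simp [PiLp.inner_apply, RCLike.inner_apply, mul_comm]

/-- gradients are orthogonal to the cycle space -/
lemma grad_orth (G : SimpleGraph V) (φ : V → ℝ) (h : EuclideanSpace ℝ (V × V))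
    (hh : h ∈ cycleSpace G) : ∑ x : V × V, (φ x.2 - φ x.1) * h x = 0 := by
  obtain ⟨h1, h2, h3⟩ := hh
  have hrow : ∀ u : V, ∑ v : V, h (u, v) = 0 := by
    intro u
    rw [Finset.sum_congr rfl (fun v _ => h1 u v)]
    simp [h3 u]
  rw [Fintype.sum_prod_type]
  have step : ∀ u : V, ∑ v : V, (φ v - φ u) * h (u, v) = ∑ v : V, φ v * h (u, v) := by
    intro u
    have e : ∀ v : V, (φ v - φ u) * h (u, v) = φ v * h (u, v) - φ u * h (u, v) := by
      intro v; ring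
    rw [Finset.sum_congr rfl (fun v _ => e v), Finset.sum_sub_distrib,
      ← Finset.mul_sum, hrow u, mul_zero, sub_zero]
  rw [Finset.sum_congr rfl (fun u _ => step u), Finset.sum_comm]
  have e2 : ∀ v : V, ∑ u : V, φ v * h (u, v) = 0 := by
    intro v; rw [← Finset.mul_sum, h3 v, mul_zero]
  rw [Finset.sum_congr rfl (fun v _ => e2 v), Finset.sum_const_zero]

variable {A B : Type*} [Fintype A] [Fintype B] [DecidableEq A] [DecidableEq B]

def sgn (p : ℝ) {α : Type*} [DecidableEq α] (a a' : α) : ℝ :=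
  if a' = a then 1 else -(1/(p-1))

/-- the explicit formula for the projected edge vector in `K_{p,q}` -/
def chain (p q : ℝ) (a : A) (b : B) : EuclideanSpace ℝ ((A ⊕ B) × (A ⊕ B)) :=
  WithLp.toLp 2 (fun x => match x with
  | (Sum.inl a', Sum.inr b') => (p-1)*(q-1)/(p*q) * sgn p a a' * sgn q b b'
  | (Sum.inr b', Sum.inl a') => -((p-1)*(q-1)/(p*q) * sgn p a a' * sgn q b b')
  | _ => 0)

/-- the potential whose gradient is `χ_(a,b) − chain p q a b` -/
def pot (p q : ℝ) (a : A) (b : B) : A ⊕ B → ℝ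
  | Sum.inl a' => if a' = a then 0 else 1/q
  | Sum.inr b' => if b' = b then (p+q-1)/(p*q) else (p-1)/(p*q)

lemma sum_sgn {α : Type*} [Fintype α] [DecidableEq α] (p : ℕ) (hp : 2 ≤ p)
    (h : Fintype.card α = p) (a : α) : ∑ a' : α, sgn (p:ℝ) a a' = 0 := by
  have hp1 : ((p:ℝ) - 1) ≠ 0 := by
    have : (2:ℝ) ≤ (p:ℝ) := by exact_mod_cast hp
    linarith
  have h0 : ∑ a' : α, sgn (p:ℝ) a a'
      = sgn (p:ℝ) a a + ∑ a' ∈ Finset.univ.erase a, sgn (p:ℝ) a a' :=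
    (Finset.add_sum_erase _ _ (Finset.mem_univ a)).symm
  have h2 : ∑ a' ∈ Finset.univ.erase a, sgn (p:ℝ) a a'
      = ((p:ℝ) - 1) * (-(1/((p:ℝ)-1))) := by
    have e : ∀ x ∈ Finset.univ.erase a, sgn (p:ℝ) a x = -(1/((p:ℝ)-1)) := by
      intro x hx
      simp [sgn, Finset.ne_of_mem_erase hx]
    rw [Finset.sum_congr rfl e, Finset.sum_const,
      Finset.card_erase_of_mem (Finset.mem_univ a), Finset.card_univ, h, nsmul_eq_mul]
    push_cast [Nat.cast_sub (by omega : 1 ≤ p)]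
    ring
  rw [h0, h2]
  simp only [sgn, if_pos rfl, if_true]
  field_simp
  norm_num

lemma chain_mem (p q : ℕ) (hp : 2 ≤ p) (hq : 2 ≤ q)
    (hA : Fintype.card A = p) (hB : Fintype.card B = q) (a : A) (b : B) :
    chain (p:ℝ) (q:ℝ) a b ∈ cycleSpace (completeBipartiteGraph A B) := by
  refine ⟨fun u v => ?_, fun u v h => ?_, fun v => ?_⟩
  · rcases u with a' | b' <;> rcases v with a'' | b'' <;> simp [chain]
  · rcases u with a' | b' <;> rcases v with a'' | b'' <;> simp_all [chain]
  · rcases v with a'' | b''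
    · rw [Fintype.sum_sum_type]
      have e1 : ∀ a' : A, chain (p:ℝ) (q:ℝ) a b (Sum.inl a', Sum.inl a'') = 0 := fun _ => rfl
      have e2 : ∀ b' : B, chain (p:ℝ) (q:ℝ) a b (Sum.inr b', Sum.inl a'')
          = -((p:ℝ)-1)*((q:ℝ)-1)/((p:ℝ)*(q:ℝ)) * sgn (p:ℝ) a a'' * sgn (q:ℝ) b b' := by
        intro b'
        show -((p-1)*(q-1)/(p*q) * sgn (p:ℝ) a a'' * sgn (q:ℝ) b b') = _
        ring
      rw [Finset.sum_congr rfl (fun x _ => e1 x), Finset.sum_congr rfl (fun x _ => e2 x)]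
      simp only [Finset.sum_const_zero, zero_add, mul_assoc, ← Finset.mul_sum]
      rw [sum_sgn q hq hB b, mul_zero, mul_zero]
    · rw [Fintype.sum_sum_type]
      have e1 : ∀ b' : B, chain (p:ℝ) (q:ℝ) a b (Sum.inr b', Sum.inr b'') = 0 := fun _ => rfl
      have e2 : ∀ a' : A, chain (p:ℝ) (q:ℝ) a b (Sum.inl a', Sum.inr b'')
          = sgn (q:ℝ) b b'' * (((p:ℝ)-1)*((q:ℝ)-1)/((p:ℝ)*(q:ℝ))) * sgn (p:ℝ) a a' := by
        intro a'
        show (p-1)*(q-1)/(p*q) * sgn (p:ℝ) a a' * sgn (q:ℝ) b b'' = _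
        ring
      rw [Finset.sum_congr rfl (fun x _ => e2 x), Finset.sum_congr rfl (fun x _ => e1 x)]
      simp only [Finset.sum_const_zero, add_zero, mul_assoc, ← Finset.mul_sum]
      rw [sum_sgn p hp hA a, mul_zero, mul_zero]

lemma chi_sub_chain_orth (p q : ℕ) (hp : 3 ≤ p) (hq : 3 ≤ q)
    (hA : Fintype.card A = p) (hB : Fintype.card B = q) (a : A) (b : B) :
    ∀ h ∈ cycleSpace (completeBipartiteGraph A B),
      ⟪edgeChi (Sum.inl a : A ⊕ B) (Sum.inr b) - chain (p:ℝ) (q:ℝ) a b, h⟫ = 0 := by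
  have hp0 : ((p:ℝ)) ≠ 0 := by positivity
  have hq0 : ((q:ℝ)) ≠ 0 := by positivity
  have hp1 : ((p:ℝ) - 1) ≠ 0 := by
    have : (3:ℝ) ≤ (p:ℝ) := by exact_mod_cast hp
    linarith
  have hq1 : ((q:ℝ) - 1) ≠ 0 := by
    have : (3:ℝ) ≤ (q:ℝ) := by exact_mod_cast hq
    linarith
  intro h hh
  obtain ⟨h1, h2, h3⟩ := hh
  have key := grad_orth (completeBipartiteGraph A B) (pot (p:ℝ) (q:ℝ) a b) h ⟨h1, h2, h3⟩
  rw [inner_sum, ← key]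
  apply Finset.sum_congr rfl
  rintro ⟨u, v⟩ _
  by_cases hadj : (completeBipartiteGraph A B).Adj u v
  · congr 1
    have hsub : (edgeChi (Sum.inl a : A ⊕ B) (Sum.inr b) - chain (p:ℝ) (q:ℝ) a b) (u, v)
        = edgeChi (Sum.inl a : A ⊕ B) (Sum.inr b) (u, v) - chain (p:ℝ) (q:ℝ) a b (u, v) := rfl
    rw [hsub]
    rcases u with a' | b' <;> rcases v with a'' | b'' <;>
      simp only [completeBipartiteGraph_adj] at hadj
    · simp at hadj
    · -- (inl a', inr b'')
      show edgeChi (Sum.inl a : A ⊕ B) (Sum.inr b) (Sum.inl a', Sum.inr b'')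
          - chain (p:ℝ) (q:ℝ) a b (Sum.inl a', Sum.inr b'')
          = pot (p:ℝ) (q:ℝ) a b (Sum.inr b'') - pot (p:ℝ) (q:ℝ) a b (Sum.inl a')
      by_cases e1 : a' = a <;> by_cases e2 : b'' = b <;>
        simp [edgeChi, chain, pot, sgn, e1, e2, Prod.ext_iff] <;> field_simp <;> ring
    · -- (inr b', inl a'')
      show edgeChi (Sum.inl a : A ⊕ B) (Sum.inr b) (Sum.inr b', Sum.inl a'')
          - chain (p:ℝ) (q:ℝ) a b (Sum.inr b', Sum.inl a'')
          = pot (p:ℝ) (q:ℝ) a b (Sum.inl a'') - pot (p:ℝ) (q:ℝ) a b (Sum.inr b')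
      by_cases e1 : a'' = a <;> by_cases e2 : b' = b <;>
        simp [edgeChi, chain, pot, sgn, e1, e2, Prod.ext_iff] <;> field_simp <;> ring
    · simp at hadj
  · rw [h2 u v hadj, mul_zero, mul_zero]

lemma proj_eq (p q : ℕ) (hp : 3 ≤ p) (hq : 3 ≤ q)
    (hA : Fintype.card A = p) (hB : Fintype.card B = q) (a : A) (b : B) :
    projEdge (completeBipartiteGraph A B) (Sum.inl a) (Sum.inr b)
      = chain (p:ℝ) (q:ℝ) a b := by
  unfold projEdge
  rw [← Submodule.starProjection_apply]
  exact Submodule.eq_starProjection_of_mem_of_inner_eq_zero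
    (chain_mem p q (by omega) (by omega) hA hB a b)
    (chi_sub_chain_orth p q hp hq hA hB a b)

lemma inner_chain_chi (p q : ℝ) (a a' : A) (b b' : B) :
    ⟪chain p q a b, edgeChi (Sum.inl a' : A ⊕ B) (Sum.inr b')⟫
      = (2 * ((p-1)*(q-1)/(p*q))) * (sgn p a a' * sgn q b b') := by
  have e : ∀ x : (A ⊕ B) × (A ⊕ B),
      chain p q a b x * edgeChi (Sum.inl a' : A ⊕ B) (Sum.inr b') x
      = (if x = (Sum.inl a', Sum.inr b') then chain p q a b (Sum.inl a', Sum.inr b') else 0)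
      + (if x = ((Sum.inr b' : A ⊕ B), (Sum.inl a' : A ⊕ B)) then
          -(chain p q a b (Sum.inr b', Sum.inl a')) else 0) := by
    intro x
    by_cases hx : x = (Sum.inl a', Sum.inr b')
    · subst hx; simp [edgeChi]
    · by_cases hx2 : x = ((Sum.inr b' : A ⊕ B), (Sum.inl a' : A ⊕ B))
      · subst hx2; simp [edgeChi]
      · simp [edgeChi, hx, hx2]
  rw [inner_sum, Finset.sum_congr rfl (fun x _ => e x), Finset.sum_add_distrib,
    Finset.sum_ite_eq' Finset.univ, Finset.sum_ite_eq' Finset.univ]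
  simp only [Finset.mem_univ, if_pos]
  show (p-1)*(q-1)/(p*q) * sgn p a a' * sgn q b b'
      + -(-((p-1)*(q-1)/(p*q) * sgn p a a' * sgn q b b')) = _
  ring

lemma inner_chain_chain (p q : ℕ) (hp : 3 ≤ p) (hq : 3 ≤ q)
    (hA : Fintype.card A = p) (hB : Fintype.card B = q) (a a' : A) (b b' : B) :
    ⟪chain (p:ℝ) (q:ℝ) a b, chain (p:ℝ) (q:ℝ) a' b'⟫
      = (2 * (((p:ℝ)-1)*((q:ℝ)-1)/((p:ℝ)*(q:ℝ)))) * (sgn (p:ℝ) a a' * sgn (q:ℝ) b b') := by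
  have h0 := chi_sub_chain_orth p q hp hq hA hB a' b' (chain (p:ℝ) (q:ℝ) a b)
    (chain_mem p q (by omega) (by omega) hA hB a b)
  have e : ⟪chain (p:ℝ) (q:ℝ) a b, chain (p:ℝ) (q:ℝ) a' b'⟫
      = ⟪chain (p:ℝ) (q:ℝ) a b, edgeChi (Sum.inl a' : A ⊕ B) (Sum.inr b')⟫
        - ⟪edgeChi (Sum.inl a' : A ⊕ B) (Sum.inr b') - chain (p:ℝ) (q:ℝ) a' b',
            chain (p:ℝ) (q:ℝ) a b⟫ := by
    have comm : ⟪edgeChi (Sum.inl a' : A ⊕ B) (Sum.inr b') - chain (p:ℝ) (q:ℝ) a' b',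
        chain (p:ℝ) (q:ℝ) a b⟫ = ⟪chain (p:ℝ) (q:ℝ) a b,
        edgeChi (Sum.inl a' : A ⊕ B) (Sum.inr b') - chain (p:ℝ) (q:ℝ) a' b'⟫ :=
      real_inner_comm _ _
    rw [comm, inner_sub_right]
    ring
  rw [e, h0, sub_zero, inner_chain_chi]

end CBPAux

open CBPAux

/-- **Section 7: the crystal lattice of the complete bipartite graph `K_{p,q}`.** For
`p, q ≥ 3`, every projected edge vector has squared norm `2(p−1)(q−1)/(pq)`, and the
normalized inner products of two distinct projected edge vectors `P χ_(a,b)`,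
`P χ_(a',b')` (with `a, a'` in one part and `b, b'` in the other) are `−1/(q−1)`,
`−1/(p−1)` or `1/((p−1)(q−1))`, according to how the endpoints overlap. -/
theorem completeBipartite_proj_norm_and_inner
    {A B : Type*} [Fintype A] [Fintype B] [DecidableEq A] [DecidableEq B]
    (p q : ℕ) (hp : 3 ≤ p) (hq : 3 ≤ q)
    (hcardA : Fintype.card A = p) (hcardB : Fintype.card B = q)
    (G : SimpleGraph (A ⊕ B)) (hG : G = completeBipartiteGraph A B) :
    (∀ (a : A) (b : B),
      ‖projEdge G (Sum.inl a) (Sum.inr b)‖ ^ 2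
        = 2 * ((p : ℝ) - 1) * ((q : ℝ) - 1) / ((p : ℝ) * q)) ∧
    (∀ (a a' : A) (b b' : B), (a, b) ≠ (a', b') →
      (a = a' → b ≠ b' →
        ⟪projEdge G (Sum.inl a) (Sum.inr b), projEdge G (Sum.inl a') (Sum.inr b')⟫ /
          (‖projEdge G (Sum.inl a) (Sum.inr b)‖ * ‖projEdge G (Sum.inl a') (Sum.inr b')‖)
            = -(1 / ((q : ℝ) - 1))) ∧
      (b = b' → a ≠ a' →
        ⟪projEdge G (Sum.inl a) (Sum.inr b), projEdge G (Sum.inl a') (Sum.inr b')⟫ /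
          (‖projEdge G (Sum.inl a) (Sum.inr b)‖ * ‖projEdge G (Sum.inl a') (Sum.inr b')‖)
            = -(1 / ((p : ℝ) - 1))) ∧
      (a ≠ a' → b ≠ b' →
        ⟪projEdge G (Sum.inl a) (Sum.inr b), projEdge G (Sum.inl a') (Sum.inr b')⟫ /
          (‖projEdge G (Sum.inl a) (Sum.inr b)‖ * ‖projEdge G (Sum.inl a') (Sum.inr b')‖)
            = 1 / (((p : ℝ) - 1) * ((q : ℝ) - 1)))) := by
  subst hG
  have hp1 : (0:ℝ) < (p:ℝ) - 1 := by
    have : (3:ℝ) ≤ (p:ℝ) := by exact_mod_cast hp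
    linarith
  have hq1 : (0:ℝ) < (q:ℝ) - 1 := by
    have : (3:ℝ) ≤ (q:ℝ) := by exact_mod_cast hq
    linarith
  have hp0 : (0:ℝ) < (p:ℝ) := by positivity
  have hq0 : (0:ℝ) < (q:ℝ) := by positivity
  set c : ℝ := 2 * (((p:ℝ)-1)*((q:ℝ)-1)/((p:ℝ)*(q:ℝ))) with hc
  have hcpos : 0 < c := by positivity
  have hnorm2 : ∀ (a : A) (b : B),
      ‖projEdge (completeBipartiteGraph A B) (Sum.inl a) (Sum.inr b)‖ ^ 2 = c := by
    intro a b
    rw [proj_eq p q hp hq hcardA hcardB a b, ← real_inner_self_eq_norm_sq,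
      inner_chain_chain p q hp hq hcardA hcardB a a b b]
    simp [sgn, hc]
  have hnorm : ∀ (a : A) (b : B),
      ‖projEdge (completeBipartiteGraph A B) (Sum.inl a) (Sum.inr b)‖ = Real.sqrt c := by
    intro a b
    rw [← hnorm2 a b, Real.sqrt_sq (norm_nonneg _)]
  constructor
  · intro a b
    rw [hnorm2 a b, hc]
    ring
  · intro a a' b b' _
    have hprod : ‖projEdge (completeBipartiteGraph A B) (Sum.inl a) (Sum.inr b)‖ *
        ‖projEdge (completeBipartiteGraph A B) (Sum.inl a') (Sum.inr b')‖ = c := by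
      rw [hnorm, hnorm, Real.mul_self_sqrt hcpos.le]
    have hinner : ⟪projEdge (completeBipartiteGraph A B) (Sum.inl a) (Sum.inr b),
        projEdge (completeBipartiteGraph A B) (Sum.inl a') (Sum.inr b')⟫
        = c * (sgn (p:ℝ) a a' * sgn (q:ℝ) b b') := by
      rw [proj_eq p q hp hq hcardA hcardB a b, proj_eq p q hp hq hcardA hcardB a' b',
        inner_chain_chain p q hp hq hcardA hcardB a a' b b']
    refine ⟨fun h1 h2 => ?_, fun h1 h2 => ?_, fun h1 h2 => ?_⟩
    · rw [hinner, hprod, mul_div_cancel_left₀ _ hcpos.ne']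
      subst h1
      simp [sgn, Ne.symm h2]
    · rw [hinner, hprod, mul_div_cancel_left₀ _ hcpos.ne']
      subst h1
      simp [sgn, Ne.symm h2]
    · rw [hinner, hprod, mul_div_cancel_left₀ _ hcpos.ne']
      have e1 : sgn (p:ℝ) a a' = -(1/((p:ℝ)-1)) := by simp [sgn, (Ne.symm h1)]
      have e2 : sgn (q:ℝ) b b' = -(1/((q:ℝ)-1)) := by simp [sgn, (Ne.symm h2)]
      rw [e1, e2, neg_mul_neg, div_mul_div_comm, one_mul]

end
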